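/- Let w₀, w₁, …, w_{n-2} : I → ℝ be differentiable functions, κ₂, …, κ_{n-1} : I → ℝ functions, and ε₂, …, ε_{n-1} ∈ {±1} signs, satisfying the system: w₁' - ε₂ε₃κ₃w₂ = 0; wᵢ' + κ_{i+1}w_{i-1} - ε_{i+1}ε_{i+2}κ_{i+2}w_{i+1} = 0 for i = 2,…,n-3; and w_{n-2}' + κ_{n-1}w_{n-3} = 0. Then the function Σ_{i=1}^{n-2} ε_{i+1} wᵢ² is constant on I. -/

import Mathlib

/-- conservation law for the spacelike g-rectifying ODE system:
under `w₁' = ε₂ε₃κ₃w₂`, `wᵢ' + κ_{i+1}w_{i-1} - ε_{i+1}ε_{i+2}κ_{i+2}w_{i+1} = 0`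
for `2 ≤ i ≤ n-3`, and `w_{n-2}' + κ_{n-1}w_{n-3} = 0`, the function
`Σ_{i=1}^{n-2} ε_{i+1} wᵢ²` is constant on the interval `I`. -/
theorem spacelike_conservation (n : ℕ) (hn : 4 ≤ n)
    (I : Set ℝ) (hIopen : IsOpen I) (hIconn : I.OrdConnected)
    (w : ℕ → ℝ → ℝ) (κ : ℕ → ℝ → ℝ) (ε : ℕ → ℝ)
    (hε : ∀ i, ε i = 1 ∨ ε i = -1)
    (hw : ∀ i, ∀ s ∈ I, DifferentiableAt ℝ (w i) s)
    (h1 : ∀ s ∈ I, deriv (w 1) s - ε 2 * ε 3 * κ 3 s * w 2 s = 0)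
    (hmid : ∀ i, 2 ≤ i → i ≤ n - 3 → ∀ s ∈ I,
      deriv (w i) s + κ (i + 1) s * w (i - 1) s
        - ε (i + 1) * ε (i + 2) * κ (i + 2) s * w (i + 1) s = 0)
    (hlast : ∀ s ∈ I, deriv (w (n - 2)) s + κ (n - 1) s * w (n - 3) s = 0) :
    ∀ s ∈ I, ∀ t ∈ I,
      (∑ i ∈ Finset.Icc 1 (n - 2), ε (i + 1) * (w i s) ^ 2)
        = ∑ i ∈ Finset.Icc 1 (n - 2), ε (i + 1) * (w i t) ^ 2 := by
  -- reparametrize: n = m + 4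
  obtain ⟨m, rfl⟩ : ∃ m, n = m + 4 := ⟨n - 4, by omega⟩
  set F : ℝ → ℝ := fun s => ∑ i ∈ Finset.Icc 1 (m + 4 - 2), ε (i + 1) * (w i s) ^ 2 with hF
  have hεsq : ∀ i, ε i * ε i = 1 := fun i => by rcases hε i with h | h <;> rw [h] <;> norm_num
  -- Derivative of F is zero at every point of I
  have key : ∀ s ∈ I, HasDerivAt F 0 s := by
    intro s hs
    have hderiv : HasDerivAt F
        (∑ i ∈ Finset.Icc 1 (m + 4 - 2), ε (i + 1) * (2 * w i s * deriv (w i) s)) s := by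
      apply HasDerivAt.fun_sum
      intro i _
      have h := ((hw i s hs).hasDerivAt.pow 2).const_mul (ε (i + 1))
      simpa [mul_comm, mul_assoc, mul_left_comm] using h
    convert hderiv using 1
    -- show the sum is zero, via telescoping
    set a : ℕ → ℝ := fun i => ε (i + 1) * κ (i + 1) s * w (i - 1) s * w i s with ha
    have hterm1 : ε 2 * (2 * w 1 s * deriv (w 1) s) = 2 * a 2 := by
      have h := h1 s hs
      have hd : deriv (w 1) s = ε 2 * ε 3 * κ 3 s * w 2 s := by linarith
      rw [hd, ha]
      norm_num
      linear_combination (2 * ε 3 * κ 3 s * w 1 s * w 2 s) * hεsq 2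
    have htermmid : ∀ i ∈ Finset.Icc 2 (m + 1),
        ε (i + 1) * (2 * w i s * deriv (w i) s) = 2 * (a (i + 1) - a i) := by
      intro i hi
      simp only [Finset.mem_Icc] at hi
      have h := hmid i hi.1 (by omega) s hs
      have hd : deriv (w i) s
          = ε (i + 1) * ε (i + 2) * κ (i + 2) s * w (i + 1) s - κ (i + 1) s * w (i - 1) s := by
        linarith
      rw [hd, ha]
      simp only
      have h2 : (i + 1 : ℕ) - 1 = i := by omega
      rw [h2, show i + 1 + 1 = i + 2 from rfl]
      linear_combination (2 * ε (i + 2) * κ (i + 2) s * w i s * w (i + 1) s) * hεsq (i + 1)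
    have htermlast : ε (m + 3) * (2 * w (m + 2) s * deriv (w (m + 2)) s) = -(2 * a (m + 2)) := by
      have h := hlast s hs
      have h2 : m + 4 - 2 = m + 2 := by omega
      have h3 : m + 4 - 3 = m + 1 := by omega
      have h4 : m + 4 - 1 = m + 3 := by omega
      rw [h2, h3, h4] at h
      have hd : deriv (w (m + 2)) s = -(κ (m + 3) s * w (m + 1) s) := by linarith
      rw [hd, ha]
      simp only
      have h5 : (m + 2 : ℕ) - 1 = m + 1 := by omega
      rw [h5]
      ring
    have hsplit : Finset.Icc 1 (m + 4 - 2)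
        = insert 1 (insert (m + 2) (Finset.Icc 2 (m + 1))) := by
      ext x
      simp only [Finset.mem_Icc, Finset.mem_insert]
      omega
    rw [hsplit, Finset.sum_insert, Finset.sum_insert]
    · rw [hterm1, show ((m:ℕ) + 2) + 1 = m + 3 from rfl, htermlast,
        Finset.sum_congr rfl htermmid]
      have htel : ∑ i ∈ Finset.Icc 2 (m + 1), (a (i + 1) - a i) = a (m + 2) - a 2 := by
        rw [show Finset.Icc 2 (m + 1) = Finset.Ico 2 (m + 2) by rw [← Finset.Ico_add_one_right_eq_Icc]; rfl,
          Finset.sum_Ico_eq_sum_range]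
        simp only [show (m + 2) - 2 = m from rfl]
        exact (Finset.sum_range_sub (fun i => a (2 + i)) m).trans (by rw [Nat.add_comm])
      rw [← Finset.mul_sum, htel]
      ring
    · simp only [Finset.mem_Icc]; omega
    · simp only [Finset.mem_insert, Finset.mem_Icc]; omega
  -- F is constant on I
  intro s hs t ht
  have hconv : Convex ℝ I := convex_iff_ordConnected.mpr hIconn
  have hdiff : DifferentiableOn ℝ F I := fun x hx => ((key x hx).differentiableAt).differentiableWithinAt
  exact hconv.is_const_of_fderivWithin_eq_zero hdiff
    (fun x hx => by
      rw [fderivWithin_of_isOpen hIopen hx, (key x hx).hasFDerivAt.fderiv]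
      ext
      simp) hs ht
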